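/- Let n be an integer with 8 ≤ n < 125 and n ∉ {8, 50, 98, 100}. Then for every choice of nonzero integers a_0, a_1, a_2, a_3, a_4 each of which has all of its prime factors ≤ 4, the polynomial F_{n,4}(x) = ∑_{j=0}^{4} a_j c_j x^j is irreducible over ℚ. -/

import Mathlib

open Polynomial

/-- `c n k j = (−1)^{k−j} C(n,j) C(n−j−1, k−j)`, the `j`-th coefficient of `P_{n,k}(x−1)`. -/
def c (n k j : ℕ) : ℤ :=
  (-1) ^ (k - j) * (n.choose j : ℤ) * ((n - j - 1).choose (k - j) : ℤ)

/-- `F n k a = ∑_{j=0}^{k} a_j c_j x^j` as a polynomial over `ℚ`. -/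
noncomputable def F (n k : ℕ) (a : ℕ → ℤ) : Polynomial ℚ :=
  ∑ j ∈ Finset.range (k + 1), Polynomial.C ((a j * c n k j : ℤ) : ℚ) * Polynomial.X ^ j


lemma dvd_coeff_mul_sub (p : ℤ) (G H : ℤ[X]) (i j : ℕ)
    (h : ∀ u v : ℕ, u + v = i + j → ¬(u = i ∧ v = j) → p ∣ G.coeff u * H.coeff v) :
    p ∣ (G * H).coeff (i + j) - G.coeff i * H.coeff j := by
  rw [Polynomial.coeff_mul]
  have hij : ((i, j) : ℕ × ℕ) ∈ Finset.HasAntidiagonal.antidiagonal (i + j) := by simp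
  rw [← Finset.add_sum_erase _ _ hij, add_sub_cancel_left]
  refine Finset.dvd_sum fun x hx => ?_
  obtain ⟨hx1, hx2⟩ := Finset.mem_erase.mp hx
  refine h x.1 x.2 (Finset.HasAntidiagonal.mem_antidiagonal.mp hx2) fun ⟨h1, h2⟩ => hx1 ?_
  exact Prod.ext h1 h2

lemma exists_not_dvd_coeff {p : ℤ} (hp : Prime p) {G : ℤ[X]} (hG : G.IsPrimitive) :
    ∃ i, ¬ p ∣ G.coeff i := by
  by_contra h
  push_neg at h
  exact hp.not_unit (hG p ((Polynomial.C_dvd_iff_dvd_coeff p G).mpr h))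

lemma key {p : ℤ} (hp : Prime p) {G H : ℤ[X]} (hGp : G.IsPrimitive) (hHp : H.IsPrimitive)
    (m : ℕ) (hdvd : ∀ k, k ≠ m → p ∣ (G * H).coeff k) :
    ∃ i j, i + j = m ∧ (∀ u, u ≠ i → p ∣ G.coeff u) ∧ (∀ v, v ≠ j → p ∣ H.coeff v) ∧
      ¬ p ∣ G.coeff i ∧ ¬ p ∣ H.coeff j := by
  have hGe : ∃ i, ¬ p ∣ G.coeff i := exists_not_dvd_coeff hp hGp
  have hHe : ∃ j, ¬ p ∣ H.coeff j := exists_not_dvd_coeff hp hHp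
  classical
  let i := Nat.find hGe
  let j := Nat.find hHe
  have hi : ¬ p ∣ G.coeff i := Nat.find_spec hGe
  have hj : ¬ p ∣ H.coeff j := Nat.find_spec hHe
  have hmin : ∀ u < i, p ∣ G.coeff u := fun u hu => not_not.mp (Nat.find_min hGe hu)
  have hminH : ∀ v < j, p ∣ H.coeff v := fun v hv => not_not.mp (Nat.find_min hHe hv)
  -- maxima
  have hbd : ∀ (Q : ℤ[X]) (u : ℕ), ¬ p ∣ Q.coeff u → u ≤ Q.natDegree := fun Q u hu =>
    Polynomial.le_natDegree_of_ne_zero (fun h0 => hu (h0 ▸ dvd_zero p))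
  let TG := (Finset.range (G.natDegree + 1)).filter (fun u => ¬ p ∣ G.coeff u)
  let TH := (Finset.range (H.natDegree + 1)).filter (fun v => ¬ p ∣ H.coeff v)
  have hTG : TG.Nonempty := ⟨i, Finset.mem_filter.mpr ⟨Finset.mem_range.mpr (Nat.lt_succ_of_le (hbd G i hi)), hi⟩⟩
  have hTH : TH.Nonempty := ⟨j, Finset.mem_filter.mpr ⟨Finset.mem_range.mpr (Nat.lt_succ_of_le (hbd H j hj)), hj⟩⟩
  let i' := TG.max' hTG
  let j' := TH.max' hTH
  have hi' : ¬ p ∣ G.coeff i' := (Finset.mem_filter.mp (TG.max'_mem hTG)).2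
  have hj' : ¬ p ∣ H.coeff j' := (Finset.mem_filter.mp (TH.max'_mem hTH)).2
  have hmax : ∀ u, i' < u → p ∣ G.coeff u := by
    intro u hu
    by_contra hnd
    exact absurd (TG.le_max' u (Finset.mem_filter.mpr
      ⟨Finset.mem_range.mpr (Nat.lt_succ_of_le (hbd G u hnd)), hnd⟩)) (by omega)
  have hmaxH : ∀ v, j' < v → p ∣ H.coeff v := by
    intro v hv
    by_contra hnd
    exact absurd (TH.le_max' v (Finset.mem_filter.mpr
      ⟨Finset.mem_range.mpr (Nat.lt_succ_of_le (hbd H v hnd)), hnd⟩)) (by omega)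
  have key1 : i + j = m := by
    by_contra hne
    have h1 : p ∣ (G * H).coeff (i + j) - G.coeff i * H.coeff j := by
      refine dvd_coeff_mul_sub p G H i j fun u v huv hne2 => ?_
      rcases lt_or_ge u i with h | h
      · exact Dvd.dvd.mul_right (hmin u h) _
      · have : v < j := by
          rcases Nat.lt_or_ge v j with h' | h'
          · exact h'
          · exact absurd ⟨by omega, by omega⟩ hne2
        exact Dvd.dvd.mul_left (hminH v this) _
    have h2 := hdvd (i + j) hne
    have : p ∣ G.coeff i * H.coeff j := by
      have := dvd_sub h2 h1
      simpa using this
    rcases hp.dvd_mul.mp this with h | h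
    · exact hi h
    · exact hj h
  have key2 : i' + j' = m := by
    by_contra hne
    have h1 : p ∣ (G * H).coeff (i' + j') - G.coeff i' * H.coeff j' := by
      refine dvd_coeff_mul_sub p G H i' j' fun u v huv hne2 => ?_
      rcases lt_or_ge i' u with h | h
      · exact Dvd.dvd.mul_right (hmax u h) _
      · have : j' < v := by
          rcases Nat.lt_or_ge j' v with h' | h'
          · exact h'
          · exact absurd ⟨by omega, by omega⟩ hne2
        exact Dvd.dvd.mul_left (hmaxH v this) _
    have h2 := hdvd (i' + j') hne
    have : p ∣ G.coeff i' * H.coeff j' := by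
      have := dvd_sub h2 h1
      simpa using this
    rcases hp.dvd_mul.mp this with h | h
    · exact hi' h
    · exact hj' h
  have hii : i ≤ i' := TG.le_max' i (Finset.mem_filter.mpr
    ⟨Finset.mem_range.mpr (Nat.lt_succ_of_le (hbd G i hi)), hi⟩)
  have hjj : j ≤ j' := TH.le_max' j (Finset.mem_filter.mpr
    ⟨Finset.mem_range.mpr (Nat.lt_succ_of_le (hbd H j hj)), hj⟩)
  have hieq : i = i' := by omega
  have hjeq : j = j' := by omega
  refine ⟨i, j, key1, fun u hu => ?_, fun v hv => ?_, hi, hj⟩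
  · rcases Nat.lt_or_ge u i with h | h
    · exact hmin u h
    · exact hmax u (by omega)
  · rcases Nat.lt_or_ge v j with h | h
    · exact hminH v h
    · exact hmaxH v (by omega)

lemma reduce (n : ℕ) (a : ℕ → ℤ) (h4 : a 4 * c n 4 4 ≠ 0)
    (Hfac : ∀ (e : ℤ) (G H : ℤ[X]), e ≠ 0 → G.IsPrimitive → H.IsPrimitive →
      1 ≤ G.natDegree → 1 ≤ H.natDegree → G.natDegree + H.natDegree = 4 →
      (∀ k ≤ 4, e * (G * H).coeff k = a k * c n 4 k) → False) :
    Irreducible (F n 4 a) := by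
  classical
  set f : ℤ[X] := ∑ j ∈ Finset.range 5, Polynomial.C (a j * c n 4 j) * Polynomial.X ^ j with hfdef
  have hco : ∀ k, f.coeff k = if k ≤ 4 then a k * c n 4 k else 0 := by
    intro k
    rw [hfdef, Polynomial.finset_sum_coeff]
    simp only [Polynomial.coeff_C_mul, Polynomial.coeff_X_pow]
    rcases le_or_gt k 4 with h | h
    · rw [if_pos h, Finset.sum_eq_single k]
      · simp
      · intro b _ hb; simp [Ne.symm hb, hb]
      · intro hk; exact absurd (Finset.mem_range.mpr (by omega)) hk
    · rw [if_neg (by omega)]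
      apply Finset.sum_eq_zero
      intro b hb
      have : b < 5 := Finset.mem_range.mp hb
      simp [show k ≠ b by omega, show b ≠ k by omega]
  have hc4 : f.coeff 4 = a 4 * c n 4 4 := by rw [hco]; simp
  have hf0 : f ≠ 0 := fun h => h4 (by rw [← hc4, h, Polynomial.coeff_zero])
  have hdeg : f.natDegree = 4 := by
    apply le_antisymm
    · apply Polynomial.natDegree_le_iff_coeff_eq_zero.mpr
      intro m hm; rw [hco]; simp [show ¬ m ≤ 4 by omega]
    · exact Polynomial.le_natDegree_of_ne_zero (by rw [hc4]; exact h4)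
  have hFf : F n 4 a = f.map (Int.castRingHom ℚ) := by
    rw [F, hfdef, Polynomial.map_sum]
    congr 1
    ext j : 1
    simp
  have hprim := f.isPrimitive_primPart
  have hppne : f.primPart ≠ 0 := hprim.ne_zero
  have hppdeg : f.primPart.natDegree = 4 := by rw [f.natDegree_primPart, hdeg]
  have hcont0 : f.content ≠ 0 := fun h => hf0 (Polynomial.content_eq_zero_iff.mp h)
  have hirr : Irreducible f.primPart := by
    constructor
    · intro hu
      have := Polynomial.natDegree_eq_zero_of_isUnit hu
      omega
    · rintro G H hGH
      by_contra hcon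
      push_neg at hcon
      obtain ⟨hG, hH⟩ := hcon
      have hG0 : G ≠ 0 := fun h => hppne (by rw [hGH, h, zero_mul])
      have hH0 : H ≠ 0 := fun h => hppne (by rw [hGH, h, mul_zero])
      have hcontent : G.content * H.content = 1 := by
        rw [← Polynomial.content_mul, ← hGH]
        exact Polynomial.isPrimitive_iff_content_eq_one.mp hprim
      have hGprim : G.IsPrimitive := Polynomial.isPrimitive_iff_content_eq_one.mpr
        (by rw [← Polynomial.normalize_content, normalize_eq_one]
            exact IsUnit.of_mul_eq_one _ hcontent)
      have hHprim : H.IsPrimitive := Polynomial.isPrimitive_iff_content_eq_one.mpr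
        (by rw [← Polynomial.normalize_content, normalize_eq_one]
            exact IsUnit.of_mul_eq_one _ (mul_comm G.content H.content ▸ hcontent))
      have hdG : 1 ≤ G.natDegree := by
        rcases Nat.eq_zero_or_pos G.natDegree with h | h
        · obtain ⟨x, hx⟩ := Polynomial.natDegree_eq_zero.mp h
          exact absurd (hx ▸ Polynomial.isUnit_C.mpr (hGprim x (hx ▸ dvd_rfl))) hG
        · exact h
      have hdH : 1 ≤ H.natDegree := by
        rcases Nat.eq_zero_or_pos H.natDegree with h | h
        · obtain ⟨x, hx⟩ := Polynomial.natDegree_eq_zero.mp h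
          exact absurd (hx ▸ Polynomial.isUnit_C.mpr (hHprim x (hx ▸ dvd_rfl))) hH
        · exact h
      have hsum : G.natDegree + H.natDegree = 4 := by
        rw [← Polynomial.natDegree_mul hG0 hH0, ← hGH, hppdeg]
      refine Hfac f.content G H hcont0 hGprim hHprim hdG hdH hsum fun k hk => ?_
      have : f = Polynomial.C f.content * (G * H) := by
        rw [← hGH]; exact f.eq_C_content_mul_primPart
      calc f.content * (G * H).coeff k = f.coeff k := by
            conv_rhs => rw [this]
            rw [Polynomial.coeff_C_mul]
        _ = a k * c n 4 k := by rw [hco, if_pos hk]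
  have hirrQ : Irreducible (f.primPart.map (Int.castRingHom ℚ)) :=
    (Polynomial.IsPrimitive.Int.irreducible_iff_irreducible_map_cast hprim).mp hirr
  have hunit : IsUnit (Polynomial.C ((f.content : ℚ))) :=
    Polynomial.isUnit_C.mpr (isUnit_iff_ne_zero.mpr (Int.cast_ne_zero.mpr hcont0))
  have hassoc : Associated (f.primPart.map (Int.castRingHom ℚ)) (F n 4 a) := by
    rw [hFf]
    conv_rhs => rw [f.eq_C_content_mul_primPart]
    rw [Polynomial.map_mul, Polynomial.map_C]
    exact ⟨hunit.unit, by simp [mul_comm]⟩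
  exact hassoc.irreducible hirrQ


section Patterns
variable (n : ℕ) (a : ℕ → ℤ)

variable (n : ℕ) (a : ℕ → ℤ)

/-- setup shared by all patterns -/
lemma setup (ha : ∀ j ≤ 4, a j ≠ 0 ∧ ∀ p : ℕ, p.Prime → (p : ℤ) ∣ a j → p ≤ 4)
    {p : ℕ} (hp5 : 5 ≤ p) (hp : p.Prime) {j : ℕ} (hj : j ≤ 4) : ¬ (p:ℤ) ∣ a j :=
  fun hd => by have := (ha j hj).2 p hp hd; omega

lemma divtrans {p : ℕ} (hpZ : Prime (p:ℤ)) {e x y z : ℤ}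
    (heq : e * x = y * z) (hy : ¬ (p:ℤ) ∣ y) (he : ¬ (p:ℤ) ∣ e) (hz : (p:ℤ) ∣ z) :
    (p:ℤ) ∣ x := by
  have h1 : (p:ℤ) ∣ e * x := heq ▸ Dvd.dvd.mul_left hz y
  rcases hpZ.dvd_mul.mp h1 with h | h
  · exact absurd h he
  · exact h

lemma sqtrans {p : ℕ} (hpZ : Prime (p:ℤ)) {e x y z : ℤ}
    (heq : e * x = y * z) (hy : ¬ (p:ℤ) ∣ y) (hx : ((p:ℤ))^2 ∣ x) : ((p:ℤ))^2 ∣ z := by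
  have h1 : ((p:ℤ))^2 ∣ y * z := heq ▸ Dvd.dvd.mul_left hx e
  exact hpZ.pow_dvd_of_dvd_mul_left 2 hy h1

lemma lemE (ha : ∀ j ≤ 4, a j ≠ 0 ∧ ∀ p : ℕ, p.Prime → (p : ℤ) ∣ a j → p ≤ 4)
    (p : ℕ) (h : 5 ≤ p ∧ Nat.Prime p ∧ (p:ℤ) ∣ c n 4 0 ∧ (p:ℤ) ∣ c n 4 1 ∧ (p:ℤ) ∣ c n 4 2 ∧
      (p:ℤ) ∣ c n 4 3 ∧ ¬ (p:ℤ) ∣ c n 4 4 ∧ ¬ ((p:ℤ))^2 ∣ c n 4 0) :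
    Irreducible (F n 4 a) := by
  obtain ⟨hp5, hp, hc0, hc1, hc2, hc3, hc4, hc0'⟩ := h
  have hpZ : Prime (p:ℤ) := Nat.prime_iff_prime_int.mp hp
  have hdvdc : ∀ k ≤ 4, k ≠ 4 → (p:ℤ) ∣ c n 4 k := by
    intro k hk hk4
    interval_cases k <;> first | exact hc0 | exact hc1 | exact hc2 | exact hc3 | exact (hk4 rfl).elim
  apply reduce
  · exact mul_ne_zero (ha 4 le_rfl).1 (fun h0 => hc4 (h0 ▸ dvd_zero _))
  · intro e G H he hGp hHp hdG hdH hsum hcoeff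
    have hG0 : G ≠ 0 := fun h => by simp [h] at hdG
    have hH0 : H ≠ 0 := fun h => by simp [h] at hdH
    have hnd : (G * H).natDegree = 4 := by rw [Polynomial.natDegree_mul hG0 hH0, hsum]
    have hpe : ¬ (p:ℤ) ∣ e := by
      intro hd
      have h1 : (p:ℤ) ∣ a 4 * c n 4 4 := (hcoeff 4 le_rfl) ▸ Dvd.dvd.mul_right hd _
      rcases hpZ.dvd_mul.mp h1 with h | h
      · exact setup a ha hp5 hp le_rfl h
      · exact hc4 h
    have hdvd : ∀ k, k ≠ 4 → (p:ℤ) ∣ (G * H).coeff k := by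
      intro k hk
      rcases le_or_gt k 4 with h | h
      · exact divtrans hpZ (hcoeff k h) (setup a ha hp5 hp h) hpe (hdvdc k h hk)
      · rw [Polynomial.coeff_eq_zero_of_natDegree_lt (hnd ▸ h)]; exact dvd_zero _
    obtain ⟨i, j, hij, hGu, hHv, hGi, hHj⟩ := key hpZ hGp hHp 4 hdvd
    have hiG : i ≤ G.natDegree := Polynomial.le_natDegree_of_ne_zero (fun h0 => hGi (h0 ▸ dvd_zero _))
    have hjH : j ≤ H.natDegree := Polynomial.le_natDegree_of_ne_zero (fun h0 => hHj (h0 ▸ dvd_zero _))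
    have hG00 : (p:ℤ) ∣ G.coeff 0 := hGu 0 (by omega)
    have hH00 : (p:ℤ) ∣ H.coeff 0 := hHv 0 (by omega)
    have hsq : ((p:ℤ))^2 ∣ (G * H).coeff 0 := by
      rw [Polynomial.mul_coeff_zero, sq]
      exact mul_dvd_mul hG00 hH00
    exact hc0' (sqtrans hpZ (hcoeff 0 (by omega)) (setup a ha hp5 hp (by omega)) hsq)

lemma lemE' (ha : ∀ j ≤ 4, a j ≠ 0 ∧ ∀ p : ℕ, p.Prime → (p : ℤ) ∣ a j → p ≤ 4)
    (p : ℕ) (h : 5 ≤ p ∧ Nat.Prime p ∧ ¬ (p:ℤ) ∣ c n 4 0 ∧ (p:ℤ) ∣ c n 4 1 ∧ (p:ℤ) ∣ c n 4 2 ∧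
      (p:ℤ) ∣ c n 4 3 ∧ (p:ℤ) ∣ c n 4 4 ∧ ¬ ((p:ℤ))^2 ∣ c n 4 4) :
    Irreducible (F n 4 a) := by
  obtain ⟨hp5, hp, hc0, hc1, hc2, hc3, hc4, hc4'⟩ := h
  have hpZ : Prime (p:ℤ) := Nat.prime_iff_prime_int.mp hp
  have hc4ne : c n 4 4 ≠ 0 := fun h0 => hc4' (h0 ▸ dvd_zero _)
  have hdvdc : ∀ k ≤ 4, k ≠ 0 → (p:ℤ) ∣ c n 4 k := by
    intro k hk hk0
    interval_cases k <;> first | exact hc1 | exact hc2 | exact hc3 | exact hc4 | exact (hk0 rfl).elim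
  apply reduce
  · exact mul_ne_zero (ha 4 le_rfl).1 hc4ne
  · intro e G H he hGp hHp hdG hdH hsum hcoeff
    have hG0 : G ≠ 0 := fun h => by simp [h] at hdG
    have hH0 : H ≠ 0 := fun h => by simp [h] at hdH
    have hnd : (G * H).natDegree = 4 := by rw [Polynomial.natDegree_mul hG0 hH0, hsum]
    have hpe : ¬ (p:ℤ) ∣ e := by
      intro hd
      have h1 : (p:ℤ) ∣ a 0 * c n 4 0 := (hcoeff 0 (by omega)) ▸ Dvd.dvd.mul_right hd _
      rcases hpZ.dvd_mul.mp h1 with h | h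
      · exact setup a ha hp5 hp (by omega) h
      · exact hc0 h
    have hdvd : ∀ k, k ≠ 0 → (p:ℤ) ∣ (G * H).coeff k := by
      intro k hk
      rcases le_or_gt k 4 with h | h
      · exact divtrans hpZ (hcoeff k h) (setup a ha hp5 hp h) hpe (hdvdc k h hk)
      · rw [Polynomial.coeff_eq_zero_of_natDegree_lt (hnd ▸ h)]; exact dvd_zero _
    obtain ⟨i, j, hij, hGu, hHv, hGi, hHj⟩ := key hpZ hGp hHp 0 hdvd
    have hGtop : (p:ℤ) ∣ G.coeff G.natDegree := hGu _ (by omega)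
    have hHtop : (p:ℤ) ∣ H.coeff H.natDegree := hHv _ (by omega)
    have hsq : ((p:ℤ))^2 ∣ (G * H).coeff 4 := by
      rw [show (4:ℕ) = G.natDegree + H.natDegree from hsum.symm,
        Polynomial.coeff_mul_degree_add_degree, sq]
      exact mul_dvd_mul hGtop hHtop
    exact hc4' (sqtrans hpZ (hcoeff 4 le_rfl) (setup a ha hp5 hp le_rfl) hsq)

lemma lemC (ha : ∀ j ≤ 4, a j ≠ 0 ∧ ∀ p : ℕ, p.Prime → (p : ℤ) ∣ a j → p ≤ 4)
    (p q : ℕ)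
    (h : 5 ≤ p ∧ Nat.Prime p ∧ (p:ℤ) ∣ c n 4 0 ∧ ¬ (p:ℤ) ∣ c n 4 1 ∧ (p:ℤ) ∣ c n 4 2 ∧
      (p:ℤ) ∣ c n 4 3 ∧ (p:ℤ) ∣ c n 4 4 ∧ ¬ ((p:ℤ))^2 ∣ c n 4 4)
    (h' : 5 ≤ q ∧ Nat.Prime q ∧ (q:ℤ) ∣ c n 4 0 ∧ (q:ℤ) ∣ c n 4 1 ∧ ¬ (q:ℤ) ∣ c n 4 2 ∧
      (q:ℤ) ∣ c n 4 3 ∧ (q:ℤ) ∣ c n 4 4 ∧ ¬ ((q:ℤ))^2 ∣ c n 4 0 ∧ ¬ ((q:ℤ))^2 ∣ c n 4 4) :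
    Irreducible (F n 4 a) := by
  obtain ⟨hp5, hp, hpc0, hpc1, hpc2, hpc3, hpc4, hpc4'⟩ := h
  obtain ⟨hq5, hq, hqc0, hqc1, hqc2, hqc3, hqc4, hqc0', hqc4'⟩ := h'
  have hpZ : Prime (p:ℤ) := Nat.prime_iff_prime_int.mp hp
  have hqZ : Prime (q:ℤ) := Nat.prime_iff_prime_int.mp hq
  have hc4ne : c n 4 4 ≠ 0 := fun h0 => hpc4' (h0 ▸ dvd_zero _)
  apply reduce
  · exact mul_ne_zero (ha 4 le_rfl).1 hc4ne
  · intro e G H he hGp hHp hdG hdH hsum hcoeff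
    have hG0 : G ≠ 0 := fun h => by simp [h] at hdG
    have hH0 : H ≠ 0 := fun h => by simp [h] at hdH
    have hnd : (G * H).natDegree = 4 := by rw [Polynomial.natDegree_mul hG0 hH0, hsum]
    have htop : (G * H).coeff 4 = G.coeff G.natDegree * H.coeff H.natDegree := by
      rw [show (4:ℕ) = G.natDegree + H.natDegree from hsum.symm,
        Polynomial.coeff_mul_degree_add_degree]
      rfl
    -- case on degree of G
    rcases (show G.natDegree = 1 ∨ G.natDegree = 2 ∨ G.natDegree = 3 by omega) with hd2 | hd2 | hd2
    · -- deg G = 1, deg H = 3 : use q (m = 2)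
      have hdHn : H.natDegree = 3 := by omega
      have hqe : ¬ (q:ℤ) ∣ e := by
        intro hd
        have h1 : (q:ℤ) ∣ a 2 * c n 4 2 := (hcoeff 2 (by omega)) ▸ Dvd.dvd.mul_right hd _
        rcases hqZ.dvd_mul.mp h1 with h | h
        · exact setup a ha hq5 hq (by omega) h
        · exact hqc2 h
      have hdvdc : ∀ k ≤ 4, k ≠ 2 → (q:ℤ) ∣ c n 4 k := by
        intro k hk hk0
        interval_cases k <;> first | exact hqc0 | exact hqc1 | exact hqc3 | exact hqc4 | exact (hk0 rfl).elim
      have hdvd : ∀ k, k ≠ 2 → (q:ℤ) ∣ (G * H).coeff k := by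
        intro k hk
        rcases le_or_gt k 4 with hle | hlt
        · exact divtrans hqZ (hcoeff k hle) (setup a ha hq5 hq hle) hqe (hdvdc k hle hk)
        · rw [Polynomial.coeff_eq_zero_of_natDegree_lt (hnd ▸ hlt)]; exact dvd_zero _
      obtain ⟨i, j, hij, hGu, hHv, hGi, hHj⟩ := key hqZ hGp hHp 2 hdvd
      have hiG : i ≤ G.natDegree := Polynomial.le_natDegree_of_ne_zero (fun h0 => hGi (h0 ▸ dvd_zero _))
      rcases (show i = 0 ∨ i = 1 by omega) with hi0 | hi1
      · -- i = 0, j = 2 : q ∣ G_1, q ∣ H_3 ⇒ q² ∣ coeff 4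
        have h1 : (q:ℤ) ∣ G.coeff G.natDegree := hGu _ (by omega)
        have h2 : (q:ℤ) ∣ H.coeff H.natDegree := hHv _ (by omega)
        have hsq : ((q:ℤ))^2 ∣ (G * H).coeff 4 := by
          rw [htop, sq]; exact mul_dvd_mul h1 h2
        exact hqc4' (sqtrans hqZ (hcoeff 4 le_rfl) (setup a ha hq5 hq le_rfl) hsq)
      · -- i = 1, j = 1 : q ∣ G_0, q ∣ H_0 ⇒ q² ∣ coeff 0
        have h1 : (q:ℤ) ∣ G.coeff 0 := hGu 0 (by omega)
        have h2 : (q:ℤ) ∣ H.coeff 0 := hHv 0 (by omega)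
        have hsq : ((q:ℤ))^2 ∣ (G * H).coeff 0 := by
          rw [Polynomial.mul_coeff_zero, sq]; exact mul_dvd_mul h1 h2
        exact hqc0' (sqtrans hqZ (hcoeff 0 (by omega)) (setup a ha hq5 hq (by omega)) hsq)
    · -- deg G = 2, deg H = 2 : use p (m = 1)
      have hdHn : H.natDegree = 2 := by omega
      have hpe : ¬ (p:ℤ) ∣ e := by
        intro hd
        have h1 : (p:ℤ) ∣ a 1 * c n 4 1 := (hcoeff 1 (by omega)) ▸ Dvd.dvd.mul_right hd _
        rcases hpZ.dvd_mul.mp h1 with h | h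
        · exact setup a ha hp5 hp (by omega) h
        · exact hpc1 h
      have hdvdc : ∀ k ≤ 4, k ≠ 1 → (p:ℤ) ∣ c n 4 k := by
        intro k hk hk0
        interval_cases k <;> first | exact hpc0 | exact hpc2 | exact hpc3 | exact hpc4 | exact (hk0 rfl).elim
      have hdvd : ∀ k, k ≠ 1 → (p:ℤ) ∣ (G * H).coeff k := by
        intro k hk
        rcases le_or_gt k 4 with hle | hlt
        · exact divtrans hpZ (hcoeff k hle) (setup a ha hp5 hp hle) hpe (hdvdc k hle hk)
        · rw [Polynomial.coeff_eq_zero_of_natDegree_lt (hnd ▸ hlt)]; exact dvd_zero _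
      obtain ⟨i, j, hij, hGu, hHv, hGi, hHj⟩ := key hpZ hGp hHp 1 hdvd
      have h1 : (p:ℤ) ∣ G.coeff G.natDegree := hGu _ (by omega)
      have h2 : (p:ℤ) ∣ H.coeff H.natDegree := hHv _ (by omega)
      have hsq : ((p:ℤ))^2 ∣ (G * H).coeff 4 := by
        rw [htop, sq]; exact mul_dvd_mul h1 h2
      exact hpc4' (sqtrans hpZ (hcoeff 4 le_rfl) (setup a ha hp5 hp le_rfl) hsq)
    · -- deg G = 3, deg H = 1 : use q (m = 2), symmetric
      have hdHn : H.natDegree = 1 := by omega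
      have hqe : ¬ (q:ℤ) ∣ e := by
        intro hd
        have h1 : (q:ℤ) ∣ a 2 * c n 4 2 := (hcoeff 2 (by omega)) ▸ Dvd.dvd.mul_right hd _
        rcases hqZ.dvd_mul.mp h1 with h | h
        · exact setup a ha hq5 hq (by omega) h
        · exact hqc2 h
      have hdvdc : ∀ k ≤ 4, k ≠ 2 → (q:ℤ) ∣ c n 4 k := by
        intro k hk hk0
        interval_cases k <;> first | exact hqc0 | exact hqc1 | exact hqc3 | exact hqc4 | exact (hk0 rfl).elim
      have hdvd : ∀ k, k ≠ 2 → (q:ℤ) ∣ (G * H).coeff k := by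
        intro k hk
        rcases le_or_gt k 4 with hle | hlt
        · exact divtrans hqZ (hcoeff k hle) (setup a ha hq5 hq hle) hqe (hdvdc k hle hk)
        · rw [Polynomial.coeff_eq_zero_of_natDegree_lt (hnd ▸ hlt)]; exact dvd_zero _
      obtain ⟨i, j, hij, hGu, hHv, hGi, hHj⟩ := key hqZ hGp hHp 2 hdvd
      have hjH : j ≤ H.natDegree := Polynomial.le_natDegree_of_ne_zero (fun h0 => hHj (h0 ▸ dvd_zero _))
      rcases (show j = 0 ∨ j = 1 by omega) with hj0 | hj1
      · -- j = 0, i = 2 : q ∣ G_3, q ∣ H_1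
        have h1 : (q:ℤ) ∣ G.coeff G.natDegree := hGu _ (by omega)
        have h2 : (q:ℤ) ∣ H.coeff H.natDegree := hHv _ (by omega)
        have hsq : ((q:ℤ))^2 ∣ (G * H).coeff 4 := by
          rw [htop, sq]; exact mul_dvd_mul h1 h2
        exact hqc4' (sqtrans hqZ (hcoeff 4 le_rfl) (setup a ha hq5 hq le_rfl) hsq)
      · -- j = 1, i = 1 : q ∣ G_0, q ∣ H_0
        have h1 : (q:ℤ) ∣ G.coeff 0 := hGu 0 (by omega)
        have h2 : (q:ℤ) ∣ H.coeff 0 := hHv 0 (by omega)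
        have hsq : ((q:ℤ))^2 ∣ (G * H).coeff 0 := by
          rw [Polynomial.mul_coeff_zero, sq]; exact mul_dvd_mul h1 h2
        exact hqc0' (sqtrans hqZ (hcoeff 0 (by omega)) (setup a ha hq5 hq (by omega)) hsq)


end Patterns

theorem F_n_four_irreducible (n : ℕ) (h1 : 8 ≤ n) (h2 : n < 125)
    (hexc : n ∉ ({8, 50, 98, 100} : Set ℕ))
    (a : ℕ → ℤ) (ha : ∀ j ≤ 4, a j ≠ 0 ∧ ∀ p : ℕ, p.Prime → (p : ℤ) ∣ a j → p ≤ 4) :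
    Irreducible (F n 4 a) := by
  interval_cases n
  · exact absurd (by simp) hexc
  · exact lemE 9 a ha 5 (by decide)
  · exact lemE' 10 a ha 5 (by decide)
  · exact lemE 11 a ha 7 (by decide)
  · exact lemC 12 a ha 11 5 (by decide) (by decide)
  · exact lemE' 13 a ha 13 (by decide)
  · exact lemE 14 a ha 5 (by decide)
  · exact lemE 15 a ha 11 (by decide)
  · exact lemC 16 a ha 5 7 (by decide) (by decide)
  · exact lemE 17 a ha 13 (by decide)
  · exact lemE 18 a ha 7 (by decide)
  · exact lemE 19 a ha 5 (by decide)
  · exact lemE' 20 a ha 5 (by decide)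
  · exact lemE 21 a ha 17 (by decide)
  · exact lemE' 22 a ha 11 (by decide)
  · exact lemE 23 a ha 19 (by decide)
  · exact lemE 24 a ha 5 (by decide)
  · exact lemE 25 a ha 7 (by decide)
  · exact lemE 26 a ha 11 (by decide)
  · exact lemE 27 a ha 23 (by decide)
  · exact lemE' 28 a ha 7 (by decide)
  · exact lemE' 29 a ha 29 (by decide)
  · exact lemE 30 a ha 13 (by decide)
  · exact lemE' 31 a ha 31 (by decide)
  · exact lemE 32 a ha 7 (by decide)
  · exact lemE 33 a ha 29 (by decide)
  · exact lemE 34 a ha 5 (by decide)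
  · exact lemE 35 a ha 31 (by decide)
  · exact lemC 36 a ha 5 17 (by decide) (by decide)
  · exact lemE 37 a ha 11 (by decide)
  · exact lemE 38 a ha 17 (by decide)
  · exact lemE 39 a ha 5 (by decide)
  · exact lemE' 40 a ha 5 (by decide)
  · exact lemE 41 a ha 37 (by decide)
  · exact lemE 42 a ha 19 (by decide)
  · exact lemE 43 a ha 13 (by decide)
  · exact lemE 44 a ha 5 (by decide)
  · exact lemE 45 a ha 41 (by decide)
  · exact lemE 46 a ha 7 (by decide)
  · exact lemE 47 a ha 43 (by decide)
  · exact lemE 48 a ha 11 (by decide)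
  · exact lemE 49 a ha 5 (by decide)
  · exact absurd (by simp) hexc
  · exact lemE 51 a ha 47 (by decide)
  · exact lemE' 52 a ha 13 (by decide)
  · exact lemE' 53 a ha 53 (by decide)
  · exact lemC 54 a ha 53 13 (by decide) (by decide)
  · exact lemE 55 a ha 17 (by decide)
  · exact lemE 56 a ha 13 (by decide)
  · exact lemE 57 a ha 53 (by decide)
  · exact lemE' 58 a ha 29 (by decide)
  · exact lemE 59 a ha 5 (by decide)
  · exact lemE 60 a ha 7 (by decide)
  · exact lemE 61 a ha 19 (by decide)
  · exact lemE 62 a ha 29 (by decide)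
  · exact lemE 63 a ha 59 (by decide)
  · exact lemE 64 a ha 5 (by decide)
  · exact lemE 65 a ha 61 (by decide)
  · exact lemE 66 a ha 31 (by decide)
  · exact lemE 67 a ha 7 (by decide)
  · exact lemE' 68 a ha 17 (by decide)
  · exact lemE 69 a ha 5 (by decide)
  · exact lemE 70 a ha 11 (by decide)
  · exact lemE 71 a ha 67 (by decide)
  · exact lemE 72 a ha 17 (by decide)
  · exact lemE 73 a ha 23 (by decide)
  · exact lemE 74 a ha 5 (by decide)
  · exact lemE 75 a ha 71 (by decide)
  · exact lemE' 76 a ha 19 (by decide)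
  · exact lemE 77 a ha 73 (by decide)
  · exact lemE 78 a ha 37 (by decide)
  · exact lemE' 79 a ha 79 (by decide)
  · exact lemE 80 a ha 19 (by decide)
  · exact lemE 81 a ha 7 (by decide)
  · exact lemE 82 a ha 13 (by decide)
  · exact lemE 83 a ha 79 (by decide)
  · exact lemE 84 a ha 5 (by decide)
  · exact lemE' 85 a ha 5 (by decide)
  · exact lemE 86 a ha 41 (by decide)
  · exact lemE 87 a ha 83 (by decide)
  · exact lemE 88 a ha 7 (by decide)
  · exact lemE 89 a ha 5 (by decide)
  · exact lemE 90 a ha 43 (by decide)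
  · exact lemE 91 a ha 29 (by decide)
  · exact lemE 92 a ha 11 (by decide)
  · exact lemE 93 a ha 89 (by decide)
  · exact lemE 94 a ha 5 (by decide)
  · exact lemE 95 a ha 7 (by decide)
  · exact lemE 96 a ha 23 (by decide)
  · exact lemE 97 a ha 31 (by decide)
  · exact absurd (by simp) hexc
  · exact lemE 99 a ha 5 (by decide)
  · exact absurd (by simp) hexc
  · exact lemE 101 a ha 97 (by decide)
  · exact lemE' 102 a ha 17 (by decide)
  · exact lemE 103 a ha 11 (by decide)
  · exact lemE' 104 a ha 13 (by decide)
  · exact lemE 105 a ha 101 (by decide)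
  · exact lemE 106 a ha 17 (by decide)
  · exact lemE 107 a ha 103 (by decide)
  · exact lemE 108 a ha 13 (by decide)
  · exact lemE 109 a ha 5 (by decide)
  · exact lemE 110 a ha 53 (by decide)
  · exact lemE 111 a ha 107 (by decide)
  · exact lemE' 112 a ha 7 (by decide)
  · exact lemE 113 a ha 109 (by decide)
  · exact lemE 114 a ha 5 (by decide)
  · exact lemE 115 a ha 37 (by decide)
  · exact lemE 116 a ha 7 (by decide)
  · exact lemE 117 a ha 113 (by decide)
  · exact lemE 118 a ha 19 (by decide)
  · exact lemE 119 a ha 5 (by decide)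
  · exact lemE 120 a ha 29 (by decide)
  · exact lemE 121 a ha 13 (by decide)
  · exact lemE 122 a ha 59 (by decide)
  · exact lemE 123 a ha 7 (by decide)
  · exact lemE 124 a ha 5 (by decide)
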